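/- Let b ∈ ℝ^d satisfy b_1 < 0 and b_k ≤ (k+1)b_{k−1} − S_{k−1} for k = 2,…,d, where S_k are partial sums. Then 0 > b_1 > b_2 > ⋯ > b_d and b_k ≤ 2^{k−1} b_1 for all k; moreover for each k ∈ {2,…,d}, b_k < S_k/(1+k) and b_j ≥ S_k/(1+k) for all j < k. -/

import Mathlib

open Finset

theorem stmt16 (d : ℕ) (b : ℕ → ℝ)
    (hb1 : b 1 < 0)
    (hrec : ∀ k, 2 ≤ k → k ≤ d →
      b k ≤ ((k : ℝ) + 1) * b (k - 1) - ∑ i ∈ Finset.Icc 1 (k - 1), b i) :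
    (∀ k, 2 ≤ k → k ≤ d → b k < b (k - 1)) ∧
    (∀ k, 1 ≤ k → k ≤ d → b k ≤ 2 ^ (k - 1) * b 1) ∧
    (∀ k, 2 ≤ k → k ≤ d →
      b k < (∑ i ∈ Finset.Icc 1 k, b i) / (1 + (k : ℝ)) ∧
      ∀ j, 1 ≤ j → j < k →
        (∑ i ∈ Finset.Icc 1 k, b i) / (1 + (k : ℝ)) ≤ b j) := by
  have key : ∀ k, 1 ≤ k → k ≤ d →
      b k < 0 ∧ b k ≤ 2 ^ (k - 1) * b 1 ∧ (2 ≤ k → b k ≤ 2 * b (k - 1)) := by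
    intro k
    induction k using Nat.strong_induction_on with
    | _ k ih =>
      intro hk1 hkd
      rcases eq_or_lt_of_le hk1 with h1 | h2
      · simp [← h1, hb1, le_of_lt hb1]
      · obtain ⟨m, rfl⟩ : ∃ m, k = m + 1 := ⟨k - 1, by omega⟩
        have hm1 : 1 ≤ m := by omega
        have hmd : m ≤ d := by omega
        have ihm := ih m (by omega) hm1 hmd
        have step : ∀ i, 1 ≤ i → i < m → b (i + 1) ≤ b i := by
          intro i hi1 him
          have h1 := ih (i + 1) (by omega) (by omega) (by omega)
          have h2 := ih i (by omega) hi1 (by omega)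
          have h3 := h1.2.2 (by omega)
          simp only [Nat.add_sub_cancel] at h3
          nlinarith [h2.1]
        have mono : ∀ j, 1 ≤ j → j ≤ m → b m ≤ b j := by
          intro j hj1 hjm
          have : ∀ n, j ≤ n → n ≤ m → b n ≤ b j := by
            intro n hn
            induction n, hn using Nat.le_induction with
            | base => intro _; exact le_rfl
            | succ n hjn ihn =>
              intro hnm
              exact le_trans (step n (by omega) (by omega)) (ihn (by omega))
          exact this m hjm le_rfl
        have hsum : (m : ℝ) * b m ≤ ∑ i ∈ Finset.Icc 1 m, b i := by
          have := Finset.card_nsmul_le_sum (Finset.Icc 1 m) b (b m) (fun i hi => by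
            simp only [Finset.mem_Icc] at hi; exact mono i hi.1 hi.2)
          simpa [Nat.card_Icc, nsmul_eq_mul] using this
        have hr := hrec (m + 1) (by omega) hkd
        simp only [Nat.add_sub_cancel] at hr
        push_cast at hr
        have hbmneg := ihm.1
        have h2m : b (m + 1) ≤ 2 * b m := by nlinarith
        refine ⟨by nlinarith, ?_, fun _ => by simpa using h2m⟩
        have hpow : (2 : ℝ) * 2 ^ (m - 1) = 2 ^ (m + 1 - 1) := by
          rw [← pow_succ']
          congr 1
          omega
        have h21 : b (m + 1) ≤ 2 * (2 ^ (m - 1) * b 1) := by nlinarith [ihm.2.1]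
        calc b (m + 1) ≤ 2 * (2 ^ (m - 1) * b 1) := h21
          _ = 2 ^ (m + 1 - 1) * b 1 := by rw [← mul_assoc, hpow]
  have gmono : ∀ i j, 1 ≤ i → i ≤ j → j ≤ d → b j ≤ b i := by
    intro i j hi1 hij hjd
    have : ∀ n, i ≤ n → n ≤ d → b n ≤ b i := by
      intro n hn
      induction n, hn using Nat.le_induction with
      | base => intro _; exact le_rfl
      | succ n hin ihn =>
        intro hnd
        have h1 := (key (n + 1) (by omega) hnd).2.2 (by omega)
        simp only [Nat.add_sub_cancel] at h1
        have h2 := (key n (by omega) (by omega)).1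
        nlinarith [ihn (by omega)]
    exact this j hij hjd
  refine ⟨?_, fun k hk1 hkd => (key k hk1 hkd).2.1, ?_⟩
  · intro k hk2 hkd
    have h1 := (key k (by omega) hkd).2.2 hk2
    have h2 := (key (k - 1) (by omega) (by omega)).1
    nlinarith
  · intro k hk2 hkd
    obtain ⟨m, rfl⟩ : ∃ m, k = m + 1 := ⟨k - 1, by omega⟩
    have hm1 : 1 ≤ m := by omega
    have hsplit : ∑ i ∈ Finset.Icc 1 (m + 1), b i
        = (∑ i ∈ Finset.Icc 1 m, b i) + b (m + 1) := by
      rw [Finset.sum_Icc_succ_top (by omega)]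
    have hsum : (m : ℝ) * b m ≤ ∑ i ∈ Finset.Icc 1 m, b i := by
      have := Finset.card_nsmul_le_sum (Finset.Icc 1 m) b (b m) (fun i hi => by
        simp only [Finset.mem_Icc] at hi; exact gmono i m hi.1 hi.2 (by omega))
      simpa [Nat.card_Icc, nsmul_eq_mul] using this
    have hr := hrec (m + 1) (by omega) hkd
    simp only [Nat.add_sub_cancel] at hr
    push_cast at hr
    have hbmneg := (key m hm1 (by omega)).1
    have h2m := (key (m + 1) (by omega) hkd).2.2 (by omega)
    simp only [Nat.add_sub_cancel] at h2m
    have hpos : (0 : ℝ) < 1 + ((m : ℝ) + 1) := by positivity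
    have hmR : (1 : ℝ) ≤ (m : ℝ) := by exact_mod_cast hm1
    constructor
    · push_cast
      rw [lt_div_iff₀ hpos, hsplit]
      nlinarith [mul_le_mul_of_nonneg_left h2m (show (0:ℝ) ≤ (m:ℝ) + 1 by positivity)]
    · intro j hj1 hjk
      have hbj : b m ≤ b j := gmono j m hj1 (by omega) (by omega)
      push_cast
      rw [div_le_iff₀ hpos, hsplit]
      nlinarith
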